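/- Let $j:[0,1]\to I\overline{\mathbb{R}}$, $j(x)=[x,x]$, $\lambda$ Lebesgue measure on $[0,1]$, and $K=j([0,1])$. Then every compact saturated support $Q$ of the image measure $j[\lambda]$ on $I\overline{\mathbb{R}}$ contains $K$; moreover $K$ itself is a measurable support of $j[\lambda]$ with $j[\lambda](K)=1$, and the smallest closed support of $j[\lambda]$ is $\downarrow K$. -/

import Mathlib

open MeasureTheory

noncomputable section

/-- The interval domain `I ℝ̄`, ordered by reverse inclusion. -/
def IR : Type := {p : EReal × EReal // p.1 ≤ p.2}

namespace IR

instance : PartialOrder IR where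
  le x y := x.1.1 ≤ y.1.1 ∧ y.1.2 ≤ x.1.2
  le_refl x := ⟨le_rfl, le_rfl⟩
  le_trans x y z h h' := ⟨h.1.trans h'.1, h'.2.trans h.2⟩
  le_antisymm x y h h' :=
    Subtype.ext (Prod.ext (le_antisymm h.1 h'.1) (le_antisymm h'.2 h.2))

/-- `I ℝ̄` carries its Scott topology. -/
instance : TopologicalSpace IR := Topology.scott IR Set.univ

/-- `I ℝ̄` carries the Borel σ-algebra of its Scott topology. -/
instance : MeasurableSpace IR := borel IR

end IR

/-- A subset is saturated if it is the intersection of its open neighborhoods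
(equivalently: upward closed for the specialization order). -/
def IsSaturated (Q : Set IR) : Prop :=
  Q = ⋂₀ {U : Set IR | IsOpen U ∧ Q ⊆ U}

/-- `E` is a support of `μ`: measurable sets with the same trace on `E` have the same
measure. -/
def IsSupport (μ : Measure IR) (E : Set IR) : Prop :=
  ∀ A B : Set IR, MeasurableSet A → MeasurableSet B → A ∩ E = B ∩ E → μ A = μ B

/-- The embedding `j : [0,1] → I ℝ̄`, `j(x) = [x,x]`. -/
def jmap (x : ℝ) : IR := ⟨((x : EReal), (x : EReal)), le_rfl⟩

/-- `K`: the image of the unit interval in `I ℝ̄`. -/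
def KIR : Set IR := jmap '' Set.Icc (0 : ℝ) 1

/-- Downward closure in `I ℝ̄`. -/
def dclIR (A : Set IR) : Set IR := {x | ∃ y ∈ A, x ≤ y}

/-- The image measure `j[λ]` of Lebesgue measure on `[0,1]` on `I ℝ̄`. -/
def lebIR : Measure IR := Measure.map jmap ((volume : Measure ℝ).restrict (Set.Icc 0 1))

namespace AuxIR

instance : Topology.IsScott IR Set.univ := ⟨rfl⟩
instance : BorelSpace IR := ⟨rfl⟩

lemma le_def (x y : IR) : x ≤ y ↔ x.1.1 ≤ y.1.1 ∧ y.1.2 ≤ x.1.2 := Iff.rfl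

lemma exists_real_btwn {x y : EReal} (h : x < y) : ∃ r : ℝ, x < (r : EReal) ∧ (r : EReal) < y := by
  obtain ⟨c, hc1, hc2⟩ := exists_between h
  refine ⟨c.toReal, ?_, ?_⟩ <;>
    rw [EReal.coe_toReal (hc2.trans_le le_top).ne (bot_le.trans_lt hc1).ne'] <;> assumption

lemma isOpenA (c : EReal) : IsOpen {y : IR | c < y.1.1} := by
  rw [Topology.IsScott.isOpen_iff_isUpperSet_and_dirSupInaccOn (D := Set.univ)]
  constructor
  · intro x y hxy hx
    exact hx.trans_le hxy.1
  · intro d _ hne hdir a hlub ha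
    by_contra hempty
    rw [Set.not_nonempty_iff_eq_empty] at hempty
    have hall : ∀ z ∈ d, z.1.1 ≤ c := by
      intro z hz
      by_contra hzc
      exact Set.eq_empty_iff_forall_notMem.mp hempty z ⟨hz, not_le.mp hzc⟩
    have hca : c ≤ a.1.2 := (le_of_lt ha).trans a.2
    have hub : (⟨(c, a.1.2), hca⟩ : IR) ∈ upperBounds d := fun z hz => ⟨hall z hz, (hlub.1 hz).2⟩
    exact absurd (hlub.2 hub).1 (not_le.mpr ha)

lemma isOpenB (c : EReal) : IsOpen {y : IR | y.1.2 < c} := by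
  rw [Topology.IsScott.isOpen_iff_isUpperSet_and_dirSupInaccOn (D := Set.univ)]
  constructor
  · intro x y hxy hx
    exact (hxy.2).trans_lt hx
  · intro d _ hne hdir a hlub ha
    by_contra hempty
    rw [Set.not_nonempty_iff_eq_empty] at hempty
    have hall : ∀ z ∈ d, c ≤ z.1.2 := by
      intro z hz
      by_contra hzc
      exact Set.eq_empty_iff_forall_notMem.mp hempty z ⟨hz, not_le.mp hzc⟩
    have hca : a.1.1 ≤ c := a.2.trans (le_of_lt ha)
    have hub : (⟨(a.1.1, c), hca⟩ : IR) ∈ upperBounds d := fun z hz => ⟨(hlub.1 hz).1, hall z hz⟩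
    exact absurd (hlub.2 hub).2 (not_le.mpr ha)

/-- The real interval `[t - |ε|, t + |ε|]` as an element of `IR`. -/
def intv (t ε : ℝ) : IR :=
  ⟨(((t - |ε| : ℝ) : EReal), ((t + |ε| : ℝ) : EReal)),
    EReal.coe_le_coe_iff.mpr (by have := abs_nonneg ε; linarith)⟩

lemma intv_le_jmap (t ε : ℝ) : intv t ε ≤ jmap t := by
  refine ⟨EReal.coe_le_coe_iff.mpr ?_, EReal.coe_le_coe_iff.mpr ?_⟩ <;>
    have := abs_nonneg ε <;> linarith

lemma isLUB_intv (t : ℝ) : IsLUB (intv t '' Set.Ioi (0:ℝ)) (jmap t) := by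
  constructor
  · rintro y ⟨ε, -, rfl⟩
    exact intv_le_jmap t ε
  · intro b hb
    constructor
    · by_contra hlt
      obtain ⟨r, hr1, hr2⟩ := exists_real_btwn (not_le.mp hlt)
      have hε : (0:ℝ) < t - r := by
        have := EReal.coe_lt_coe_iff.mp hr2; linarith
      have h1 := (hb ⟨t - r, hε, rfl⟩).1
      simp only [intv] at h1
      rw [show t - |t - r| = r by rw [abs_of_pos hε]; ring] at h1
      exact absurd (h1.trans_lt hr1) (lt_irrefl _)
    · by_contra hlt
      obtain ⟨r, hr1, hr2⟩ := exists_real_btwn (not_le.mp hlt)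
      have hε : (0:ℝ) < r - t := by
        have := EReal.coe_lt_coe_iff.mp hr1; linarith
      have h1 := (hb ⟨r - t, hε, rfl⟩).2
      simp only [intv] at h1
      rw [show t + |r - t| = r by rw [abs_of_pos hε]; ring] at h1
      exact absurd (hr2.trans_le h1) (lt_irrefl _)

lemma intv_mono {t ε₁ ε₂ : ℝ} (h0 : 0 < ε₂) (h0' : 0 < ε₁) (h : ε₂ ≤ ε₁) :
    intv t ε₁ ≤ intv t ε₂ := by
  refine ⟨EReal.coe_le_coe_iff.mpr ?_, EReal.coe_le_coe_iff.mpr ?_⟩ <;>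
    rw [abs_of_pos h0, abs_of_pos h0'] <;> linarith

lemma directedOn_intv (t : ℝ) : DirectedOn (· ≤ ·) (intv t '' Set.Ioi (0:ℝ)) := by
  rintro _ ⟨ε₁, hε₁, rfl⟩ _ ⟨ε₂, hε₂, rfl⟩
  exact ⟨intv t (min ε₁ ε₂), ⟨min ε₁ ε₂, Set.mem_Ioi.mpr (lt_min hε₁ hε₂), rfl⟩,
    intv_mono (lt_min hε₁ hε₂) hε₁ (min_le_left _ _),
    intv_mono (lt_min hε₁ hε₂) hε₂ (min_le_right _ _)⟩

lemma mem_open_jmap {U : Set IR} (hU : IsOpen U) {t : ℝ} (h : jmap t ∈ U) :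
    ∃ ε : ℝ, 0 < ε ∧ ∀ s ∈ Set.Ioo (t - ε) (t + ε), jmap s ∈ U := by
  rw [Topology.IsScott.isOpen_iff_isUpperSet_and_dirSupInaccOn (D := Set.univ)] at hU
  obtain ⟨hup, hinacc⟩ := hU
  obtain ⟨y, ⟨ε, hε, rfl⟩, hyU⟩ :=
    hinacc (d := intv t '' Set.Ioi (0:ℝ)) (Set.mem_univ _)
      ⟨intv t 1, ⟨1, Set.mem_Ioi.mpr one_pos, rfl⟩⟩ (directedOn_intv t) (isLUB_intv t) h
  refine ⟨ε, hε, fun s hs => hup ?_ hyU⟩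
  refine ⟨EReal.coe_le_coe_iff.mpr ?_, EReal.coe_le_coe_iff.mpr ?_⟩ <;>
    rw [abs_of_pos hε]
  · exact hs.1.le
  · exact hs.2.le

lemma lebIR_apply (hjm : Measurable jmap) {S : Set IR} (hS : MeasurableSet S) :
    lebIR S = volume (jmap ⁻¹' S ∩ Set.Icc 0 1) := by
  rw [lebIR, Measure.map_apply hjm hS, Measure.restrict_apply (hjm hS)]

lemma lebIR_univ (hjm : Measurable jmap) : lebIR Set.univ = 1 := by
  rw [lebIR_apply hjm MeasurableSet.univ, Set.preimage_univ, Set.univ_inter, Real.volume_Icc]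
  norm_num

lemma vol_pos {t δ : ℝ} (ht : t ∈ Set.Icc (0:ℝ) 1) (hδ : 0 < δ) :
    0 < volume (Set.Ioo (t - δ) (t + δ) ∩ Set.Icc 0 1) := by
  obtain ⟨ht0, ht1⟩ := ht
  have hsub : Set.Ioo (max (t - δ) 0) (min (t + δ) 1) ⊆
      Set.Ioo (t - δ) (t + δ) ∩ Set.Icc 0 1 := by
    intro x hx
    obtain ⟨h1, h2⟩ := hx
    rw [max_lt_iff] at h1
    rw [lt_min_iff] at h2
    exact ⟨⟨h1.1, h2.1⟩, h1.2.le, h2.2.le⟩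
  refine lt_of_lt_of_le ?_ (measure_mono hsub)
  rw [Real.volume_Ioo]
  apply ENNReal.ofReal_pos.mpr
  rcases le_total (t + δ) 1 with h | h <;> rcases le_total (t - δ) 0 with h' | h' <;>
    simp [min_eq_left, min_eq_right, max_eq_left, max_eq_right, *] <;> linarith

lemma isSupport_of_full (hjm : Measurable jmap) {E : Set IR} (hE : MeasurableSet E)
    (h1 : lebIR E = 1) : IsSupport lebIR E := by
  have hcompl : lebIR Eᶜ = 0 := by
    rw [measure_compl hE (by rw [h1]; exact ENNReal.one_ne_top), lebIR_univ hjm, h1, tsub_self]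
  intro A B hA hB hAB
  have key : ∀ S : Set IR, lebIR S = lebIR (S ∩ E) := by
    intro S
    have h2 : lebIR (S \ E) = 0 :=
      le_antisymm ((measure_mono (Set.diff_subset_compl S E)).trans hcompl.le) (zero_le)
    refine le_antisymm ?_ (measure_mono Set.inter_subset_left)
    calc lebIR S = lebIR (S ∩ E ∪ S \ E) := by rw [Set.inter_union_diff]
    _ ≤ lebIR (S ∩ E) + lebIR (S \ E) := measure_union_le _ _
    _ = lebIR (S ∩ E) := by rw [h2, add_zero]
  rw [key A, key B, hAB]

lemma isSupport_mono {E F : Set IR} (hEF : E ⊆ F) (hE : IsSupport lebIR E) :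
    IsSupport lebIR F := by
  intro A B hA hB hAB
  apply hE A B hA hB
  calc A ∩ E = (A ∩ F) ∩ E := by rw [Set.inter_assoc, Set.inter_eq_self_of_subset_right hEF]
  _ = (B ∩ F) ∩ E := by rw [hAB]
  _ = B ∩ E := by rw [Set.inter_assoc, Set.inter_eq_self_of_subset_right hEF]

lemma nat_small {c k : ℝ} (hc : 0 < c) (hk : 0 < k) : ∃ n : ℕ, k / ((n:ℝ) + 1) < c := by
  obtain ⟨n, hn⟩ := exists_nat_gt (k / c)
  refine ⟨n, ?_⟩
  have h1 : k / c < (n:ℝ) + 1 := hn.trans (lt_add_one _)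
  have h2 : (0:ℝ) < (n:ℝ) + 1 := by positivity
  rw [div_lt_iff₀ h2]
  have := (div_lt_iff₀ hc).mp h1
  nlinarith

/-- Basic Scott-open "strictly inside `(q, r)`" sets. -/
def Vq (q r : ℝ) : Set IR := {y | (q : EReal) < y.1.1 ∧ y.1.2 < (r : EReal)}

lemma isOpenVq (q r : ℝ) : IsOpen (Vq q r) := by
  have : Vq q r = {y : IR | (q : EReal) < y.1.1} ∩ {y : IR | y.1.2 < (r : EReal)} := rfl
  rw [this]
  exact (isOpenA _).inter (isOpenB _)

lemma KIR_eq : KIR = ⋂ n : ℕ, ⋃ q : ℚ,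
    ⋃ (_ : -(1/((n:ℝ)+1)) ≤ (q:ℝ) ∧ (q:ℝ) ≤ 1), Vq (q:ℝ) ((q:ℝ) + 3/((n:ℝ)+1)) := by
  ext x
  constructor
  · rintro ⟨t, ht, rfl⟩
    rw [Set.mem_iInter]
    intro n
    have hδ : (0:ℝ) < 1/((n:ℝ)+1) := by positivity
    obtain ⟨q, hq1, hq2⟩ := exists_rat_btwn (show t - 1/((n:ℝ)+1) < t by linarith)
    rw [Set.mem_iUnion]
    refine ⟨q, ?_⟩
    rw [Set.mem_iUnion]
    refine ⟨⟨by linarith [ht.1], by linarith [ht.2]⟩, ?_⟩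
    constructor
    · exact EReal.coe_lt_coe_iff.mpr hq2
    · have h2pos : (0:ℝ) < 2/((n:ℝ)+1) := by positivity
      have hsum : (1:ℝ)/((n:ℝ)+1) + 2/((n:ℝ)+1) = 3/((n:ℝ)+1) := by ring
      exact EReal.coe_lt_coe_iff.mpr (by linarith)
  · intro hx
    rw [Set.mem_iInter] at hx
    have hget : ∀ n : ℕ, ∃ q : ℚ, (-(1/((n:ℝ)+1)) ≤ (q:ℝ) ∧ (q:ℝ) ≤ 1) ∧
        ((q:ℝ) : EReal) < x.1.1 ∧ x.1.2 < (((q:ℝ) + 3/((n:ℝ)+1) : ℝ) : EReal) := by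
      intro n
      have := hx n
      rw [Set.mem_iUnion] at this
      obtain ⟨q, hq⟩ := this
      rw [Set.mem_iUnion] at hq
      obtain ⟨hq1, hq2⟩ := hq
      exact ⟨q, hq1, hq2⟩
    -- finiteness of both endpoints
    obtain ⟨q₀, hq₀b, hq₀1, hq₀2⟩ := hget 0
    have hxbot : x.1.1 ≠ ⊥ := fun h => by rw [h] at hq₀1; exact (not_lt_bot hq₀1)
    have hxtop : x.1.2 ≠ ⊤ := fun h => by
      rw [h] at hq₀2; exact (not_top_lt hq₀2)
    have hatop : x.1.1 ≠ ⊤ := fun h => hxtop (top_le_iff.mp (h ▸ x.2))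
    have hbbot : x.1.2 ≠ ⊥ := fun h => hxbot (le_bot_iff.mp (h ▸ x.2))
    set a' := x.1.1.toReal with ha'def
    set b' := x.1.2.toReal with hb'def
    have ha : ((a' : ℝ) : EReal) = x.1.1 := EReal.coe_toReal hatop hxbot
    have hb : ((b' : ℝ) : EReal) = x.1.2 := EReal.coe_toReal hxtop hbbot
    have hab : a' ≤ b' := by
      rw [← EReal.coe_le_coe_iff, ha, hb]; exact x.2
    have hkey : ∀ n : ℕ, ∃ q : ℚ, -(1/((n:ℝ)+1)) ≤ (q:ℝ) ∧ (q:ℝ) ≤ 1 ∧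
        (q:ℝ) < a' ∧ b' < (q:ℝ) + 3/((n:ℝ)+1) := by
      intro n
      obtain ⟨q, ⟨h1, h2⟩, h3, h4⟩ := hget n
      refine ⟨q, h1, h2, ?_, ?_⟩
      · rw [← ha] at h3; exact EReal.coe_lt_coe_iff.mp h3
      · rw [← hb] at h4; exact EReal.coe_lt_coe_iff.mp h4
    have ha0 : 0 ≤ a' := by
      by_contra hcon
      push_neg at hcon
      obtain ⟨n, hn⟩ := nat_small (show (0:ℝ) < -a' by linarith) one_pos
      obtain ⟨q, h1, -, h3, -⟩ := hkey n
      linarith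
    have hb1 : b' ≤ 1 := by
      by_contra hcon
      push_neg at hcon
      obtain ⟨n, hn⟩ := nat_small (show (0:ℝ) < b' - 1 by linarith) (by norm_num : (0:ℝ) < 3)
      obtain ⟨q, -, h2, -, h4⟩ := hkey n
      linarith
    have hba : b' ≤ a' := by
      by_contra hcon
      push_neg at hcon
      obtain ⟨n, hn⟩ := nat_small (show (0:ℝ) < b' - a' by linarith) (by norm_num : (0:ℝ) < 3)
      obtain ⟨q, -, -, h3, h4⟩ := hkey n
      linarith
    have heq : a' = b' := le_antisymm hab hba
    refine ⟨a', ⟨ha0, heq ▸ hb1⟩, ?_⟩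
    apply Subtype.ext
    apply Prod.ext
    · exact ha
    · show ((a' : ℝ) : EReal) = x.1.2
      rw [heq, hb]

lemma KIR_measurable : MeasurableSet KIR := by
  rw [KIR_eq]
  exact MeasurableSet.iInter fun n => MeasurableSet.iUnion fun q =>
    MeasurableSet.iUnion fun _ => (isOpenVq _ _).measurableSet

lemma lebIR_KIR (hjm : Measurable jmap) : lebIR KIR = 1 := by
  rw [lebIR_apply hjm KIR_measurable]
  have : jmap ⁻¹' KIR ∩ Set.Icc 0 1 = Set.Icc 0 1 :=
    Set.inter_eq_right.mpr fun s hs => ⟨s, hs, rfl⟩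
  rw [this, Real.volume_Icc]
  norm_num

end AuxIR

open AuxIR

/-- Every compact saturated support of `j[λ]` contains `K`; `K` is itself a measurable
support of `j[λ]` with `j[λ](K) = 1`; and `↓K` is the smallest closed support of
`j[λ]`. -/
theorem lebIR_supports (hjm : Measurable jmap) :
    (∀ Q : Set IR, IsCompact Q → IsSaturated Q → IsSupport lebIR Q → KIR ⊆ Q) ∧
    (MeasurableSet KIR ∧ lebIR KIR = 1 ∧ IsSupport lebIR KIR) ∧
    (IsClosed (dclIR KIR) ∧ IsSupport lebIR (dclIR KIR) ∧
      ∀ C : Set IR, IsClosed C → IsSupport lebIR C → dclIR KIR ⊆ C) := by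
  have hKsupp : IsSupport lebIR KIR := isSupport_of_full hjm KIR_measurable (lebIR_KIR hjm)
  have hKsub : ∀ C : Set IR, IsClosed C → IsSupport lebIR C → KIR ⊆ C := by
    rintro C hC hCsupp _ ⟨t, ht, rfl⟩
    by_contra hxC
    have hopen : IsOpen Cᶜ := hC.isOpen_compl
    obtain ⟨ε, hε, hIoo⟩ := mem_open_jmap hopen hxC
    have h0 : lebIR Cᶜ = 0 := by
      have := hCsupp Cᶜ ∅ hopen.measurableSet MeasurableSet.empty
        (by rw [Set.compl_inter_self, Set.empty_inter])
      rwa [measure_empty] at this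
    rw [lebIR_apply hjm hopen.measurableSet] at h0
    have hsub : Set.Ioo (t - ε) (t + ε) ∩ Set.Icc 0 1 ⊆ jmap ⁻¹' Cᶜ ∩ Set.Icc 0 1 :=
      fun s hs => ⟨hIoo s hs.1, hs.2⟩
    have := (measure_mono hsub).trans h0.le
    exact absurd (le_antisymm this (zero_le)) (vol_pos ht hε).ne'
  have hdcl_eq : dclIR KIR = {x : IR | x.1.1 ≤ (1 : EReal) ∧ (0 : EReal) ≤ x.1.2} := by
    ext x
    constructor
    · rintro ⟨y, ⟨t, ht, rfl⟩, hxy⟩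
      have h1' : x.1.1 ≤ ((t : ℝ) : EReal) := hxy.1
      have h2' : ((t : ℝ) : EReal) ≤ x.1.2 := hxy.2
      refine ⟨h1'.trans ?_, le_trans ?_ h2'⟩
      · exact_mod_cast ht.2
      · exact_mod_cast ht.1
    · rintro ⟨h1, h2⟩
      set m : EReal := max x.1.1 0 with hmdef
      have hm0 : (0 : EReal) ≤ m := le_max_right _ _
      have hm1 : m ≤ (1 : EReal) := max_le h1 (by norm_num)
      have h1top : (1 : EReal) < ⊤ := by
        rw [show (1 : EReal) = ((1 : ℝ) : EReal) from rfl]; exact EReal.coe_lt_top 1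
      have h0bot : (⊥ : EReal) < 0 := by
        rw [show (0 : EReal) = ((0 : ℝ) : EReal) from rfl]; exact EReal.bot_lt_coe 0
      have hmtop : m ≠ ⊤ := (hm1.trans_lt h1top).ne
      have hmbot : m ≠ ⊥ := (h0bot.trans_le hm0).ne'
      set t := m.toReal with htdef
      have hmt : ((t : ℝ) : EReal) = m := EReal.coe_toReal hmtop hmbot
      have ht : t ∈ Set.Icc (0:ℝ) 1 := by
        constructor
        · rw [← EReal.coe_le_coe_iff]; rw [hmt]; exact_mod_cast hm0
        · rw [← EReal.coe_le_coe_iff]; rw [hmt]; exact_mod_cast hm1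
      refine ⟨jmap t, ⟨t, ht, rfl⟩, ?_, ?_⟩
      · show x.1.1 ≤ ((t : ℝ) : EReal)
        rw [hmt]; exact le_max_left _ _
      · show ((t : ℝ) : EReal) ≤ x.1.2
        rw [hmt]; exact max_le x.2 h2
  refine ⟨?_, ⟨KIR_measurable, lebIR_KIR hjm, hKsupp⟩, ?_, ?_, ?_⟩
  · -- compact saturated supports contain K
    rintro Q hQc hQs hQsupp _ ⟨t, ht, rfl⟩
    by_contra hxQ
    have hQup : IsUpperSet Q := by
      rw [hQs]
      intro a b hab ha
      rw [Set.mem_sInter] at ha ⊢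
      exact fun U hU =>
        (Topology.IsScott.isUpperSet_of_isOpen (D := Set.univ) hU.1) hab (ha U hU)
    have hsep : ∀ y ∈ Q, ((t : ℝ) : EReal) < y.1.1 ∨ y.1.2 < ((t : ℝ) : EReal) := by
      intro y hy
      by_contra hcon
      push_neg at hcon
      have hle : y ≤ jmap t := ⟨hcon.1, hcon.2⟩
      exact hxQ (hQup hle hy)
    set U : ℕ → Set IR := fun n =>
      {y : IR | (((t + 1/((n:ℝ)+1) : ℝ)) : EReal) < y.1.1} ∪
      {y : IR | y.1.2 < (((t - 1/((n:ℝ)+1) : ℝ)) : EReal)} with hUdef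
    have hUopen : ∀ n, IsOpen (U n) := fun n => (isOpenA _).union (isOpenB _)
    have hUmono : Monotone U := by
      intro n m hnm
      have hd : 1/((m:ℝ)+1) ≤ 1/((n:ℝ)+1) := by
        apply one_div_le_one_div_of_le (by positivity)
        have : (n:ℝ) ≤ m := Nat.cast_le.mpr hnm
        linarith
      rintro y (hy | hy)
      · exact Or.inl ((EReal.coe_le_coe_iff.mpr (by linarith)).trans_lt hy)
      · exact Or.inr (hy.trans_le (EReal.coe_le_coe_iff.mpr (by linarith)))
    have hcover : Q ⊆ ⋃ n, U n := by
      intro y hy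
      rw [Set.mem_iUnion]
      rcases hsep y hy with h | h
      · obtain ⟨r, hr1, hr2⟩ := exists_real_btwn h
        have hrt : 0 < r - t := by
          have := EReal.coe_lt_coe_iff.mp hr1; linarith
        obtain ⟨n, hn⟩ := nat_small hrt one_pos
        exact ⟨n, Or.inl ((EReal.coe_lt_coe_iff.mpr (by linarith)).trans hr2)⟩
      · obtain ⟨r, hr1, hr2⟩ := exists_real_btwn h
        have hrt : 0 < t - r := by
          have := EReal.coe_lt_coe_iff.mp hr2; linarith
        obtain ⟨n, hn⟩ := nat_small hrt one_pos
        exact ⟨n, Or.inr (hr1.trans (EReal.coe_lt_coe_iff.mpr (by linarith)))⟩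
    obtain ⟨F, hF⟩ := hQc.elim_finite_subcover U hUopen hcover
    set N := F.sup id with hNdef
    have hQU : Q ⊆ U N := by
      intro y hy
      obtain ⟨n, hnF, hyn⟩ := Set.mem_iUnion₂.mp (hF hy)
      exact hUmono (Finset.le_sup (f := id) hnF) hyn
    have h1 : lebIR (U N) = 1 := by
      have := hQsupp (U N) Set.univ (hUopen N).measurableSet MeasurableSet.univ
        (by rw [Set.univ_inter, Set.inter_eq_self_of_subset_right hQU])
      rwa [lebIR_univ hjm] at this
    set δ := 1/((N:ℝ)+1) with hδdef
    have hδ : (0:ℝ) < δ := by positivity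
    have hpre : jmap ⁻¹' (U N) = Set.Iio (t - δ) ∪ Set.Ioi (t + δ) := by
      ext s
      simp only [hUdef, Set.mem_preimage, Set.mem_union, Set.mem_setOf_eq, jmap,
        Set.mem_Iio, Set.mem_Ioi, EReal.coe_lt_coe_iff]
      show ((t + δ : ℝ) : EReal) < (s : EReal) ∨ (s : EReal) < ((t - δ : ℝ) : EReal) ↔
        s < t - δ ∨ t + δ < s
      rw [EReal.coe_lt_coe_iff, EReal.coe_lt_coe_iff]
      tauto
    rw [lebIR_apply hjm (hUopen N).measurableSet, hpre] at h1
    have hdisj : Disjoint ((Set.Iio (t - δ) ∪ Set.Ioi (t + δ)) ∩ Set.Icc 0 1)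
        (Set.Ioo (t - δ) (t + δ) ∩ Set.Icc 0 1) := by
      rw [Set.disjoint_left]
      rintro s ⟨h1', -⟩ ⟨⟨h2, h3⟩, -⟩
      rcases h1' with h | h
      · exact absurd h2 (not_lt.mpr h.le)
      · exact absurd h3 (not_lt.mpr h.le)
    have hun : ((Set.Iio (t - δ) ∪ Set.Ioi (t + δ)) ∩ Set.Icc 0 1) ∪
        (Set.Ioo (t - δ) (t + δ) ∩ Set.Icc 0 1) ⊆ Set.Icc (0:ℝ) 1 :=
      Set.union_subset Set.inter_subset_right Set.inter_subset_right
    have hcomb : (1 : ENNReal) + volume (Set.Ioo (t - δ) (t + δ) ∩ Set.Icc 0 1) ≤ 1 + 0 := by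
      rw [add_zero, ← h1,
        ← measure_union hdisj (measurableSet_Ioo.inter measurableSet_Icc)]
      refine (measure_mono hun).trans ?_
      rw [Real.volume_Icc]
      norm_num
      exact h1.ge
    exact (not_le.mpr (vol_pos ht hδ))
      ((ENNReal.add_le_add_iff_left ENNReal.one_ne_top).mp hcomb)
  · -- dclIR KIR closed
    rw [hdcl_eq]
    rw [← isOpen_compl_iff]
    have : {x : IR | x.1.1 ≤ (1 : EReal) ∧ (0 : EReal) ≤ x.1.2}ᶜ =
        {y : IR | (1 : EReal) < y.1.1} ∪ {y : IR | y.1.2 < (0 : EReal)} := by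
      ext y
      simp only [Set.mem_compl_iff, Set.mem_setOf_eq, Set.mem_union, not_and_or, not_le]
    rw [this]
    exact (isOpenA _).union (isOpenB _)
  · -- dclIR KIR is a support
    exact isSupport_mono (fun y hy => ⟨y, hy, le_rfl⟩) hKsupp
  · -- minimality
    intro C hC hCsupp
    have hKC : KIR ⊆ C := hKsub C hC hCsupp
    rintro x ⟨y, hyK, hxy⟩
    exact (Topology.IsScott.isLowerSet_of_isClosed hC) hxy (hKC hyK)
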